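/- Let f: ℝ^d → ℝ be μ-strongly convex with minimizer x*. Define the Lyapunov function E(x, y) := f(x) − f(x*) + (μ/2)‖y − x*‖² and the vector field G(x, y) := (y − x, x − y − (1/μ)∇f(x)). Then for all x, y ∈ ℝ^d: −⟨∇E(x,y), G(x,y)⟩ ≥ E(x, y) + (μ/2)‖x − y‖². -/

import Mathlib

open scoped RealInnerProductSpace

/-- Strong Lyapunov property for the accelerated gradient flow:
with `E(x,y) = f x − f x* + (μ/2)‖y − x*‖²`, whose gradient is
`∇E(x,y) = (∇f x, μ(y − x*))`, and
`G(x,y) = (y − x, x − y − (1/μ)∇f x)`, one has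
`−⟨∇E(x,y), G(x,y)⟩ ≥ E(x,y) + (μ/2)‖x − y‖²`. -/
theorem strong_lyapunov_property_agd_flow {d : ℕ}
    (f : EuclideanSpace ℝ (Fin d) → ℝ) (f' : EuclideanSpace ℝ (Fin d) → EuclideanSpace ℝ (Fin d))
    (μ : ℝ) (hμ : 0 < μ)
    (hf : ∀ x, HasGradientAt f (f' x) x)
    (hsc : ∀ x y, f y - f x - ⟪f' x, y - x⟫ ≥ μ / 2 * ‖x - y‖ ^ 2)
    (xs : EuclideanSpace ℝ (Fin d)) (hmin : ∀ z, f xs ≤ f z) (hgrad0 : f' xs = 0)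
    (x y : EuclideanSpace ℝ (Fin d)) :
    -(⟪f' x, y - x⟫ + ⟪μ • (y - xs), x - y - μ⁻¹ • f' x⟫) ≥
      (f x - f xs + μ / 2 * ‖y - xs‖ ^ 2) + μ / 2 * ‖x - y‖ ^ 2 := by
  have h1 := hsc x xs
  have key : ‖x - xs‖ ^ 2 = ‖y - xs‖ ^ 2 + 2 * ⟪y - xs, x - y⟫ + ‖x - y‖ ^ 2 := by
    have hx : x - xs = (y - xs) + (x - y) := by abel
    rw [hx, norm_add_sq_real]
  have expand : ⟪μ • (y - xs), x - y - μ⁻¹ • f' x⟫ =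
      μ * ⟪y - xs, x - y⟫ - ⟪y - xs, f' x⟫ := by
    rw [real_inner_smul_left, inner_sub_right, real_inner_smul_right]
    field_simp
  have lin : ⟪f' x, xs - x⟫ = ⟪f' x, y - x⟫ - ⟪f' x, y - xs⟫ := by
    rw [← inner_sub_right]; congr 1; abel
  have comm : ⟪y - xs, f' x⟫ = ⟪f' x, y - xs⟫ := real_inner_comm _ _
  rw [expand, comm]
  nlinarith [key, lin, h1]
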